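/- (Proposition 1, bottom-up bound.) Let P be a probability distribution on an instance space X, let the per-instance loss satisfy 0 ≤ ℓ(θ; x) ≤ 1 for every θ ∈ Θ and P-almost every x, and let D ∼ P^n be an i.i.d. dataset. Assume the population risk attains its infimum L_P* := inf_{θ ∈ Θ} L_P(θ) at some θ* ∈ Θ. Let θ̂_BU be a (possibly randomized) data-dependent heuristic satisfying θ̂_BU ∈ argmin_{θ ∈ Θ} L̂_D(θ). Then E[ L_P(θ̂_BU) ] − L_P* ≤ sqrt( I(θ̂_BU; D) / (2n) ). -/

import Mathlib

open MeasureTheory ProbabilityTheory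
open scoped ENNReal

open Classical in
/-- The Kullback–Leibler divergence between two measures, valued in `ℝ≥0∞`:
it is `∫ log (dμ/dν) dμ` when `μ ≪ ν` and the log-likelihood ratio is integrable,
and `∞` otherwise. -/
noncomputable def klDiv {α : Type*} [MeasurableSpace α] (μ ν : Measure α) : ℝ≥0∞ :=
  if μ ≪ ν ∧ Integrable (llr μ ν) μ then ENNReal.ofReal (∫ x, llr μ ν x ∂μ) else ⊤

/-- The mutual information `I(U; V)` between two random variables: the KL divergence
between their joint law and the product of their marginal laws. -/
noncomputable def mutualInfo {Ω α β : Type*} [MeasurableSpace Ω] [MeasurableSpace α]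
    [MeasurableSpace β] (μ : Measure Ω) (U : Ω → α) (V : Ω → β) : ℝ≥0∞ :=
  klDiv (μ.map fun ω => (U ω, V ω)) ((μ.map U).prod (μ.map V))

section Helpers
open Real

-- Hoeffding's lemma inequality: 1 - m + m * exp s ≤ exp (s*m + s^2/8) for m ∈ [0,1].
lemma hoeffding_aux (m : ℝ) (hm0 : 0 ≤ m) (hm1 : m ≤ 1) (s : ℝ) :
    1 - m + m * exp s ≤ exp (s * m + s ^ 2 / 8) := by
  set u : ℝ → ℝ := fun t => 1 - m + m * exp t with hu_def
  have hu_pos : ∀ t, 0 < u t := by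
    intro t
    rcases eq_or_lt_of_le hm0 with h | h
    · simp only [hu_def, ← h]; norm_num
    · have h1 : 0 ≤ 1 - m := by linarith
      have h2 : 0 < m * exp t := mul_pos h (exp_pos t)
      simp only [hu_def]; linarith
  set ψ : ℝ → ℝ := fun t => m + t / 4 - m * exp t / u t with hψ_def
  set φ : ℝ → ℝ := fun t => t * m + t ^ 2 / 8 - log (u t) with hφ_def
  have hu : ∀ t, HasDerivAt u (m * exp t) t := by
    intro t
    exact ((Real.hasDerivAt_exp t).const_mul m).const_add (1 - m)
  have hφ' : ∀ t, HasDerivAt φ (ψ t) t := by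
    intro t
    have h1 : HasDerivAt (fun t => t * m + t ^ 2 / 8) (m + t / 4) t := by
      have := ((hasDerivAt_id t).mul_const m).add
        (((hasDerivAt_pow 2 t)).div_const 8)
      exact this.congr_deriv (by norm_num; ring)
    have h2 : HasDerivAt (fun t => log (u t)) (m * exp t / u t) t :=
      (hu t).log (hu_pos t).ne'
    exact h1.sub h2
  have hψ' : ∀ t, HasDerivAt ψ (1 / 4 - m * exp t * (1 - m) / (u t) ^ 2) t := by
    intro t
    have h1 : HasDerivAt (fun t => m + t / 4) (1 / 4) t := by
      simpa using ((hasDerivAt_id t).div_const 4).const_add m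
    have h2 : HasDerivAt (fun t => m * exp t / u t)
        ((m * exp t * u t - m * exp t * (m * exp t)) / (u t) ^ 2) t :=
      ((Real.hasDerivAt_exp t).const_mul m).div (hu t) (hu_pos t).ne'
    have h3 : (m * exp t * u t - m * exp t * (m * exp t)) / (u t) ^ 2
        = m * exp t * (1 - m) / (u t) ^ 2 := by
      congr 1; simp only [hu_def]; ring
    rw [h3] at h2
    exact h1.sub h2
  have hψ_nonneg : ∀ t, 0 ≤ 1 / 4 - m * exp t * (1 - m) / (u t) ^ 2 := by
    intro t
    have hA : 0 ≤ m * exp t := mul_nonneg hm0 (exp_pos t).le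
    have hB : 0 ≤ 1 - m := by linarith
    have hu2 : (0:ℝ) < (u t) ^ 2 := pow_pos (hu_pos t) 2
    rw [sub_nonneg, div_le_iff₀ hu2]
    have hut : u t = 1 - m + m * exp t := rfl
    rw [hut]
    nlinarith [sq_nonneg (m * exp t - (1 - m))]
  have hψ_mono : Monotone ψ := by
    have : ∀ t, 0 ≤ deriv ψ t := fun t => (hψ' t).deriv ▸ hψ_nonneg t
    exact monotone_of_deriv_nonneg (fun t => (hψ' t).differentiableAt) this
  have hψ0 : ψ 0 = 0 := by
    have : u 0 = 1 := by simp [hu_def]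
    simp [hψ_def, this]
  have hφ_mono : MonotoneOn φ (Set.Ici 0) := by
    refine monotoneOn_of_deriv_nonneg (convex_Ici 0)
      (Differentiable.continuous (fun t => (hφ' t).differentiableAt)).continuousOn ?_ ?_
    · intro t _; exact (hφ' t).differentiableAt.differentiableWithinAt
    · intro t ht
      rw [(hφ' t).deriv]
      rw [← hψ0]
      exact hψ_mono (le_of_lt (by simpa using ht))
  have hφ_anti : AntitoneOn φ (Set.Iic 0) := by
    refine antitoneOn_of_deriv_nonpos (convex_Iic 0)
      (Differentiable.continuous (fun t => (hφ' t).differentiableAt)).continuousOn ?_ ?_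
    · intro t _; exact (hφ' t).differentiableAt.differentiableWithinAt
    · intro t ht
      rw [(hφ' t).deriv, ← hψ0]
      exact hψ_mono (le_of_lt (by simpa using ht))
  have hφ0 : φ 0 = 0 := by
    have : u 0 = 1 := by simp [hu_def]
    simp [hφ_def, this]
  have hφs : 0 ≤ φ s := by
    rcases le_or_gt 0 s with h | h
    · rw [← hφ0]; exact hφ_mono Set.self_mem_Ici h h
    · rw [← hφ0]; exact hφ_anti h.le Set.self_mem_Iic h.le
  have hlog : log (u s) ≤ s * m + s ^ 2 / 8 := by
    simp only [hφ_def] at hφs; linarith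
  calc 1 - m + m * exp s = u s := rfl
    _ ≤ exp (s * m + s ^ 2 / 8) := by
        rw [← Real.exp_log (hu_pos s)]; exact Real.exp_le_exp.mpr hlog

-- Step A: KL nonnegativity
lemma kl_nonneg' {α : Type*} [MeasurableSpace α] (μ ν : Measure α)
    [IsProbabilityMeasure μ] [IsProbabilityMeasure ν]
    (hac : μ ≪ ν) (hint : Integrable (llr μ ν) μ) :
    0 ≤ ∫ x, llr μ ν x ∂μ := by
  have h1 : Integrable (fun x => (ν.rnDeriv μ x).toReal) μ :=
    Measure.integrable_toReal_rnDeriv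
  have h2 : ∫ x, (ν.rnDeriv μ x).toReal ∂μ ≤ 1 := by
    have := Measure.setIntegral_toReal_rnDeriv_le (μ := ν) (ν := μ) (s := Set.univ)
      (by simp)
    simpa using this.trans (by simp)
  have hexp : Real.exp (∫ x, -llr μ ν x ∂μ) ≤ ∫ x, Real.exp (-llr μ ν x) ∂μ := by
    have := convexOn_exp.map_integral_le (μ := μ) (f := fun x => -llr μ ν x)
      continuous_exp.continuousOn isClosed_univ (by simp) hint.neg ?_
    · simpa using this
    · exact (integrable_congr (exp_neg_llr hac)).mpr h1
  have heq : ∫ x, Real.exp (-llr μ ν x) ∂μ = ∫ x, (ν.rnDeriv μ x).toReal ∂μ :=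
    integral_congr_ae (exp_neg_llr hac)
  have : Real.exp (∫ x, -llr μ ν x ∂μ) ≤ 1 := by
    rw [heq] at hexp; exact hexp.trans h2
  have h3 : ∫ x, -llr μ ν x ∂μ ≤ 0 := by
    have := Real.exp_le_exp.mp (by simpa using this)
    simpa using this
  rw [integral_neg] at h3; linarith

lemma mgf_one {𝒳 : Type*} [MeasurableSpace 𝒳] (P : Measure 𝒳) [IsProbabilityMeasure P]
    (X : 𝒳 → ℝ) (hX : Measurable X) (hb : ∀ᵐ x ∂P, X x ∈ Set.Icc (0:ℝ) 1) (t : ℝ) :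
    ∫ x, exp (t * ((∫ y, X y ∂P) - X x)) ∂P ≤ exp (t ^ 2 / 8) := by
  have hXi : Integrable X P := by
    refine (integrable_const (1:ℝ)).mono' hX.aestronglyMeasurable ?_
    filter_upwards [hb] with x hx
    rw [Real.norm_eq_abs, abs_le]; exact ⟨by linarith [hx.1], hx.2⟩
  set m : ℝ := ∫ y, X y ∂P with hm_def
  have hm0 : 0 ≤ m := integral_nonneg_of_ae (by filter_upwards [hb] with x hx using hx.1)
  have hm1 : m ≤ 1 := by
    have := integral_mono_of_nonneg (μ := P)
      (by filter_upwards [hb] with x hx using hx.1) (integrable_const (1:ℝ))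
      (by filter_upwards [hb] with x hx using hx.2)
    simpa using this
  have hptwise : ∀ᵐ x ∂P, exp (-t * X x) ≤ (1 - X x) + X x * exp (-t) := by
    filter_upwards [hb] with x hx
    have h := convexOn_exp.2 (Set.mem_univ (0:ℝ)) (Set.mem_univ (-t))
      (by linarith [hx.2] : (0:ℝ) ≤ 1 - X x) hx.1 (by ring)
    simp only [smul_eq_mul, mul_zero, zero_add, Real.exp_zero, mul_one] at h
    rw [mul_comm]; exact h
  have hint_rhs : Integrable (fun x => (1 - X x) + X x * exp (-t)) P :=
    ((integrable_const (1:ℝ)).sub hXi).add (hXi.mul_const _)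
  have hint_lhs : Integrable (fun x => exp (-t * X x)) P := by
    refine (integrable_const (exp |t|)).mono'
      (((hX.const_mul (-t)).exp).aestronglyMeasurable) ?_
    filter_upwards [hb] with x hx
    rw [Real.norm_eq_abs, abs_of_pos (exp_pos _)]
    apply Real.exp_le_exp.mpr
    rcases le_or_gt t 0 with h | h
    · calc -t * X x ≤ -t * 1 := by nlinarith [hx.1, hx.2]
        _ ≤ |t| := by rw [abs_of_nonpos h]; linarith
    · calc -t * X x ≤ 0 := by nlinarith [mul_nonneg h.le hx.1]
        _ ≤ |t| := abs_nonneg t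
  have hsub : Integrable (fun x => 1 - X x) P := (integrable_const (1:ℝ)).sub hXi
  have hrhs_eq : ∫ x, ((1 - X x) + X x * exp (-t)) ∂P = 1 - m + m * exp (-t) := by
    rw [integral_add hsub (hXi.mul_const _), integral_sub (integrable_const (1:ℝ)) hXi,
      integral_const, integral_mul_const]
    simp [hm_def]
  have step1 : ∫ x, exp (-t * X x) ∂P ≤ 1 - m + m * exp (-t) := by
    have h := integral_mono_ae hint_lhs hint_rhs hptwise
    rwa [hrhs_eq] at h
  have step2 : 1 - m + m * exp (-t) ≤ exp (-t * m + t ^ 2 / 8) := by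
    have := hoeffding_aux m hm0 hm1 (-t)
    simpa [neg_sq] using this
  calc ∫ x, exp (t * (m - X x)) ∂P = ∫ x, exp (t * m) * exp (-t * X x) ∂P := by
        congr 1; ext x; rw [← Real.exp_add]; ring_nf
    _ = exp (t * m) * ∫ x, exp (-t * X x) ∂P := integral_const_mul _ _
    _ ≤ exp (t * m) * exp (-t * m + t ^ 2 / 8) := by
        apply mul_le_mul_of_nonneg_left (step1.trans step2) (exp_pos _).le
    _ = exp (t ^ 2 / 8) := by rw [← Real.exp_add]; ring_nf

lemma dv_bound' {α : Type*} [MeasurableSpace α] (μ ν : Measure α)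
    [IsProbabilityMeasure μ] [IsProbabilityMeasure ν]
    (hac : μ ≪ ν) (hint : Integrable (llr μ ν) μ) (f : α → ℝ)
    (hfμ : Integrable f μ) (hfν : Integrable (fun x => exp (f x)) ν) :
    ∫ x, f x ∂μ ≤ (∫ x, llr μ ν x ∂μ) + Real.log (∫ x, exp (f x) ∂ν) := by
  set κ := ν.tilted f with hκ
  haveI : IsProbabilityMeasure κ := isProbabilityMeasure_tilted hfν
  have hνκ : ν ≪ κ := absolutelyContinuous_tilted hfν
  have hμκ : μ ≪ κ := hac.trans hνκ
  have h_eq : ∫ x, llr μ κ x ∂μ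
      = ∫ x, llr μ ν x ∂μ - ∫ x, f x ∂μ + Real.log (∫ x, exp (f x) ∂ν) :=
    integral_llr_tilted_right hac hfμ hfν hint
  have h_nonneg : 0 ≤ ∫ x, llr μ κ x ∂μ :=
    kl_nonneg' μ κ hμκ (integrable_llr_tilted_right hac hfμ hint hfν)
  linarith

lemma integral_eval_pi' {𝒳 : Type*} [MeasurableSpace 𝒳] (P : Measure 𝒳) [IsProbabilityMeasure P]
    (n : ℕ) (i : Fin n) (h : 𝒳 → ℝ) :
    ∫ d : Fin n → 𝒳, h (d i) ∂(Measure.pi fun _ : Fin n => P) = ∫ x, h x ∂P := by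
  letI : MeasureSpace 𝒳 := ⟨P⟩
  have hvpi : (volume : Measure (Fin n → 𝒳)) = Measure.pi fun _ : Fin n => P := by
    rw [volume_pi]; rfl
  rw [← hvpi]
  have key := integral_fintype_prod_volume_eq_prod (𝕜 := ℝ) (ι := Fin n) (E := fun _ => 𝒳)
    (fun j x => if j = i then h x else 1)
  have h1 : ∀ d : Fin n → 𝒳, (∏ j : Fin n, if j = i then h (d j) else 1) = h (d i) := by
    intro d
    rw [Finset.prod_ite_eq' Finset.univ i (fun j => h (d j))]
    simp
  have h2 : (∏ j : Fin n, ∫ x : 𝒳, if j = i then h x else 1) = ∫ x, h x ∂P := by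
    have : ∀ j : Fin n, (∫ x : 𝒳, if j = i then h x else 1) = if j = i then ∫ x, h x ∂P else 1 := by
      intro j
      by_cases hj : j = i <;> simp [hj] <;> rfl
    rw [Finset.prod_congr rfl fun j _ => this j,
      Finset.prod_ite_eq' Finset.univ i (fun _ => ∫ x, h x ∂P)]
    simp
  simp_rw [h1] at key
  rw [key, h2]

lemma mgf_pi' {𝒳 : Type*} [MeasurableSpace 𝒳] (P : Measure 𝒳) [IsProbabilityMeasure P]
    (n : ℕ) (hn : 0 < n) (X : 𝒳 → ℝ) (hX : Measurable X)
    (hb : ∀ᵐ x ∂P, X x ∈ Set.Icc (0:ℝ) 1) (lam : ℝ) :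
    ∫ d : Fin n → 𝒳, exp (lam * ((∫ y, X y ∂P) - (∑ i, X (d i)) / n))
        ∂(Measure.pi fun _ : Fin n => P)
      ≤ exp (lam ^ 2 / (8 * n)) := by
  letI : MeasureSpace 𝒳 := ⟨P⟩
  have hvol : (volume : Measure 𝒳) = P := rfl
  set m : ℝ := ∫ y, X y ∂P with hm_def
  have hnR : (0:ℝ) < (n:ℝ) := by exact_mod_cast hn
  have key : ∀ d : Fin n → 𝒳,
      exp (lam * (m - (∑ i, X (d i)) / n)) = ∏ i : Fin n, exp ((lam / n) * (m - X (d i))) := by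
    intro d
    rw [← Real.exp_sum]
    congr 1
    rw [← Finset.mul_sum, Finset.sum_sub_distrib, Finset.sum_const, Finset.card_univ,
      Fintype.card_fin, nsmul_eq_mul]
    field_simp
  have hvpi : (volume : Measure (Fin n → 𝒳)) = Measure.pi fun _ : Fin n => P := by
    rw [volume_pi]; rfl
  rw [← hvpi]
  calc ∫ d : Fin n → 𝒳, exp (lam * (m - (∑ i, X (d i)) / n))
      = ∫ d : Fin n → 𝒳, ∏ i : Fin n, exp ((lam / n) * (m - X (d i))) := by
        exact integral_congr_ae (Filter.Eventually.of_forall fun d => key d)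
    _ = (∫ x : 𝒳, exp ((lam / n) * (m - X x))) ^ n := by
        rw [integral_fintype_prod_volume_eq_pow (ι := Fin n) (fun x => exp ((lam / n) * (m - X x)))]
        simp
    _ ≤ (exp ((lam / n) ^ 2 / 8)) ^ n := by
        apply pow_le_pow_left₀ (integral_nonneg fun x => (exp_pos _).le)
        exact mgf_one P X hX hb (lam / n)
    _ = exp (lam ^ 2 / (8 * n)) := by
        rw [← Real.exp_nat_mul]
        congr 1
        field_simp


/-- **Proposition 1, bottom-up bound.** With population minimizer `θ*` and an
empirical risk minimizer `θ̂_BU` over `Θ`, we have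
`E[L_P(θ̂_BU)] − L_P* ≤ √(I(θ̂_BU; D)/(2n))`. -/
theorem bottomUp_excess_risk_le
    {Ω 𝒳 Θ : Type*} [MeasurableSpace Ω] [MeasurableSpace 𝒳] [MeasurableSpace Θ]
    (μ : Measure Ω) [IsProbabilityMeasure μ]
    (P : Measure 𝒳) [IsProbabilityMeasure P]
    (n : ℕ) (hn : 0 < n)
    (ℓ : Θ → 𝒳 → ℝ) (hℓ : Measurable (Function.uncurry ℓ))
    (hbound : ∀ θ : Θ, ∀ᵐ x ∂P, ℓ θ x ∈ Set.Icc (0 : ℝ) 1)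
    (D : Ω → Fin n → 𝒳) (hD : Measurable D)
    (hDlaw : μ.map D = Measure.pi fun _ : Fin n => P)
    (θstar : Θ) (hθstar : ∀ θ : Θ, (∫ x, ℓ θstar x ∂P) ≤ ∫ x, ℓ θ x ∂P)
    (θhat : Ω → Θ) (hθhat : Measurable θhat)
    (hmin : ∀ ω : Ω, ∀ θ : Θ,
      (∑ i, ℓ (θhat ω) (D ω i)) / n ≤ (∑ i, ℓ θ (D ω i)) / n) :
    ENNReal.ofReal
        ((∫ ω, ∫ x, ℓ (θhat ω) x ∂P ∂μ) - ∫ x, ℓ θstar x ∂P)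
      ≤ (mutualInfo μ θhat D / (2 * n)) ^ (1/2 : ℝ) := by
  classical
  set Dn : Measure (Fin n → 𝒳) := Measure.pi fun _ : Fin n => P with hDn_def
  set J : Measure (Θ × (Fin n → 𝒳)) := μ.map (fun ω => (θhat ω, D ω)) with hJ_def
  set pp : Measure (Θ × (Fin n → 𝒳)) := (μ.map θhat).prod Dn with hpp_def
  have hmeasθD : Measurable fun ω => (θhat ω, D ω) := hθhat.prodMk hD
  haveI : IsProbabilityMeasure J := Measure.isProbabilityMeasure_map hmeasθD.aemeasurable
  haveI : IsProbabilityMeasure (μ.map θhat) := Measure.isProbabilityMeasure_map hθhat.aemeasurable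
  haveI : IsProbabilityMeasure Dn := by rw [hDn_def]; infer_instance
  haveI : IsProbabilityMeasure pp := by rw [hpp_def]; infer_instance
  have hMI : mutualInfo μ θhat D = klDiv J pp := by
    rw [mutualInfo, hDlaw]
  rw [hMI, klDiv]
  split_ifs with hcond
  case neg =>
    -- RHS is ⊤
    have h2n : ((2 : ℝ≥0∞) * n) ≠ ⊤ := by
      simp [ENNReal.mul_ne_top, ENNReal.natCast_ne_top]
    rw [ENNReal.top_div_of_ne_top h2n, ENNReal.top_rpow_of_pos (by norm_num)]
    exact le_top
  obtain ⟨hac, hint⟩ := hcond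
  set Ir : ℝ := ∫ p, llr J pp p ∂J with hIr_def
  have hIr_nonneg : 0 ≤ Ir := kl_nonneg' J pp hac hint
  -- basic measurability / functions
  set Lp : Θ → ℝ := fun θ => ∫ x, ℓ θ x ∂P with hLp_def
  set Le : Θ → (Fin n → 𝒳) → ℝ := fun θ d => (∑ i, ℓ θ (d i)) / n with hLe_def
  have hℓθ_meas : ∀ θ, Measurable (ℓ θ) := fun θ => hℓ.comp measurable_prodMk_left
  have hℓθ_int : ∀ θ, Integrable (ℓ θ) P := by
    intro θ
    refine (integrable_const (1:ℝ)).mono' (hℓθ_meas θ).aestronglyMeasurable ?_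
    filter_upwards [hbound θ] with x hx
    rw [Real.norm_eq_abs, abs_le]; exact ⟨by linarith [hx.1], hx.2⟩
  have hLp_mem : ∀ θ, Lp θ ∈ Set.Icc (0:ℝ) 1 := by
    intro θ
    constructor
    · exact integral_nonneg_of_ae (by filter_upwards [hbound θ] with x hx using hx.1)
    · have := integral_mono_of_nonneg (μ := P)
        (by filter_upwards [hbound θ] with x hx using hx.1) (integrable_const (1:ℝ))
        (by filter_upwards [hbound θ] with x hx using hx.2)
      simpa [hLp_def] using this
  have hLp_meas : Measurable Lp := by
    have : StronglyMeasurable fun θ => ∫ x, (Function.uncurry ℓ) (θ, x) ∂P :=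
      hℓ.stronglyMeasurable.integral_prod_right'
    exact this.measurable
  have hLe_meas : Measurable fun p : Θ × (Fin n → 𝒳) => Le p.1 p.2 := by
    apply Measurable.div_const
    apply Finset.measurable_sum
    intro i _
    exact hℓ.comp (measurable_fst.prodMk ((measurable_pi_apply i).comp measurable_snd))
  set g : Θ × (Fin n → 𝒳) → ℝ := fun p => Lp p.1 - Le p.1 p.2 with hg_def
  have hg_meas : Measurable g := (hLp_meas.comp measurable_fst).sub hLe_meas
  -- a.e. coordinate bounds
  have hDn_ae : ∀ θ, ∀ᵐ d ∂Dn, ∀ i, ℓ θ (d i) ∈ Set.Icc (0:ℝ) 1 := by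
    intro θ
    rw [ae_all_iff]
    intro i
    have hP0 : P {x : 𝒳 | ℓ θ x ∈ Set.Icc (0:ℝ) 1}ᶜ = 0 := by
      rw [Set.compl_setOf]; exact ae_iff.mp (hbound θ)
    have h0 : Dn ((fun d : Fin n → 𝒳 => d i) ⁻¹' {x : 𝒳 | ℓ θ x ∈ Set.Icc (0:ℝ) 1}ᶜ) = 0 :=
      Measure.pi_eval_preimage_null _ hP0
    rw [ae_iff]
    convert h0 using 2
    rfl
  have hLe_mem_of : ∀ θ (d : Fin n → 𝒳), (∀ i, ℓ θ (d i) ∈ Set.Icc (0:ℝ) 1) →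
      Le θ d ∈ Set.Icc (0:ℝ) 1 := by
    intro θ d hd
    have hnR : (0:ℝ) < n := by exact_mod_cast hn
    constructor
    · apply div_nonneg (Finset.sum_nonneg fun i _ => (hd i).1) hnR.le
    · rw [div_le_one hnR]
      calc ∑ i, ℓ θ (d i) ≤ ∑ _i : Fin n, (1:ℝ) := Finset.sum_le_sum fun i _ => (hd i).2
        _ = n := by simp
  have hpp_ae : ∀ᵐ p ∂pp, ∀ i, ℓ p.1 (p.2 i) ∈ Set.Icc (0:ℝ) 1 := by
    rw [ae_all_iff]
    intro i
    have hs : MeasurableSet {p : Θ × (Fin n → 𝒳) | ℓ p.1 (p.2 i) ∈ Set.Icc (0:ℝ) 1} :=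
      (hℓ.comp (measurable_fst.prodMk ((measurable_pi_apply i).comp measurable_snd)))
        measurableSet_Icc
    have hkey : pp {p : Θ × (Fin n → 𝒳) | ℓ p.1 (p.2 i) ∈ Set.Icc (0:ℝ) 1}ᶜ = 0 := by
      rw [hpp_def, Measure.measure_prod_null hs.compl]
      filter_upwards [] with θ
      have heq : (Prod.mk θ ⁻¹' {p : Θ × (Fin n → 𝒳) | ℓ p.1 (p.2 i) ∈ Set.Icc (0:ℝ) 1}ᶜ)
          = (fun d : Fin n → 𝒳 => d i) ⁻¹' {x : 𝒳 | ℓ θ x ∈ Set.Icc (0:ℝ) 1}ᶜ := by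
        ext d; simp
      rw [heq]
      have hP0 : P {x : 𝒳 | ℓ θ x ∈ Set.Icc (0:ℝ) 1}ᶜ = 0 := by
        rw [Set.compl_setOf]; exact ae_iff.mp (hbound θ)
      exact Measure.pi_eval_preimage_null _ hP0
    rw [ae_iff]
    convert hkey using 2
    rfl
  have hJ_ae : ∀ᵐ p ∂J, ∀ i, ℓ p.1 (p.2 i) ∈ Set.Icc (0:ℝ) 1 := hac.ae_le hpp_ae
  have hg_bdd_J : ∀ᵐ p ∂J, |g p| ≤ 1 := by
    filter_upwards [hJ_ae] with p hp
    have h1 := hLp_mem p.1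
    have h2 := hLe_mem_of p.1 p.2 hp
    rw [abs_le]
    exact ⟨by simp only [hg_def]; linarith [h1.1, h2.2], by simp only [hg_def]; linarith [h1.2, h2.1]⟩
  have hg_int_J : Integrable g J :=
    (integrable_const (1:ℝ)).mono' hg_meas.aestronglyMeasurable
      (by filter_upwards [hg_bdd_J] with p hp using by rwa [Real.norm_eq_abs])
  -- Step: ∫ Le(θhat ω, D ω) dμ ≥ ... relation to Lp θstar
  have hμ_ae : ∀ᵐ ω ∂μ, ∀ i, ℓ (θhat ω) (D ω i) ∈ Set.Icc (0:ℝ) 1 := by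
    have := (ae_map_iff hmeasθD.aemeasurable
      (p := fun p : Θ × (Fin n → 𝒳) => ∀ i, ℓ p.1 (p.2 i) ∈ Set.Icc (0:ℝ) 1) ?_).mp hJ_ae
    · exact this
    · rw [Set.setOf_forall]
      apply MeasurableSet.iInter
      intro i
      exact (hℓ.comp (measurable_fst.prodMk ((measurable_pi_apply i).comp measurable_snd)))
        measurableSet_Icc
  have hμD_ae : ∀ᵐ ω ∂μ, ∀ i, ℓ θstar (D ω i) ∈ Set.Icc (0:ℝ) 1 := by
    have := (ae_map_iff hD.aemeasurable
      (p := fun d : Fin n → 𝒳 => ∀ i, ℓ θstar (d i) ∈ Set.Icc (0:ℝ) 1) ?_).mp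
      (by rw [hDlaw]; exact hDn_ae θstar)
    · exact this
    · rw [Set.setOf_forall]
      apply MeasurableSet.iInter
      intro i
      exact ((hℓθ_meas θstar).comp (measurable_pi_apply i)) measurableSet_Icc
  have hLeθhat_int : Integrable (fun ω => Le (θhat ω) (D ω)) μ := by
    refine (integrable_const (1:ℝ)).mono'
      ((hLe_meas.comp hmeasθD).aestronglyMeasurable) ?_
    filter_upwards [hμ_ae] with ω hω
    have := hLe_mem_of (θhat ω) (D ω) hω
    rw [Real.norm_eq_abs, abs_le]; exact ⟨by linarith [this.1], this.2⟩
  have hLeθstar_int : Integrable (fun ω => Le θstar (D ω)) μ := by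
    refine (integrable_const (1:ℝ)).mono'
      (((hLe_meas.comp (measurable_const.prodMk hD))).aestronglyMeasurable) ?_
    filter_upwards [hμD_ae] with ω hω
    have := hLe_mem_of θstar (D ω) hω
    rw [Real.norm_eq_abs, abs_le]; exact ⟨by linarith [this.1], this.2⟩
  have hstepD : ∫ ω, Le (θhat ω) (D ω) ∂μ ≤ Lp θstar := by
    have h1 : ∫ ω, Le (θhat ω) (D ω) ∂μ ≤ ∫ ω, Le θstar (D ω) ∂μ :=
      integral_mono_ae hLeθhat_int hLeθstar_int (ae_of_all _ fun ω => hmin ω θstar)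
    have h2 : ∫ ω, Le θstar (D ω) ∂μ = ∫ d, Le θstar d ∂Dn := by
      rw [← hDlaw, integral_map hD.aemeasurable]
      exact ((hLe_meas.comp (measurable_const.prodMk measurable_id))).aestronglyMeasurable
    have h3 : ∫ d, Le θstar d ∂Dn = Lp θstar := by
      have hint_i : ∀ i : Fin n, Integrable (fun d : Fin n → 𝒳 => ℓ θstar (d i)) Dn := by
        intro i
        refine (integrable_const (1:ℝ)).mono'
          (((hℓθ_meas θstar).comp (measurable_pi_apply i)).aestronglyMeasurable) ?_
        filter_upwards [hDn_ae θstar] with d hd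
        rw [Real.norm_eq_abs, abs_le]; exact ⟨by linarith [(hd i).1], (hd i).2⟩
      simp only [hLe_def]
      rw [integral_div, integral_finset_sum _ fun i _ => hint_i i]
      have : ∀ i : Fin n, ∫ d : Fin n → 𝒳, ℓ θstar (d i) ∂Dn = Lp θstar := fun i =>
        integral_eval_pi' P n i (ℓ θstar)
      rw [Finset.sum_congr rfl fun i _ => this i]
      simp only [Finset.sum_const, Finset.card_univ, Fintype.card_fin, nsmul_eq_mul]
      field_simp
    linarith [h1, h2 ▸ h1, h3 ▸ h2 ▸ h1]
  -- ∫ g dJ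
  have hgJ : ∫ p, g p ∂J = (∫ ω, Lp (θhat ω) ∂μ) - ∫ ω, Le (θhat ω) (D ω) ∂μ := by
    rw [hJ_def, integral_map hmeasθD.aemeasurable hg_meas.aestronglyMeasurable]
    simp only [hg_def]
    rw [integral_sub]
    · refine (integrable_const (1:ℝ)).mono'
        ((hLp_meas.comp hθhat).aestronglyMeasurable) ?_
      filter_upwards [] with ω
      rw [Real.norm_eq_abs, abs_le]
      exact ⟨by linarith [(hLp_mem (θhat ω)).1], (hLp_mem (θhat ω)).2⟩
    · exact hLeθhat_int
  -- MGF bound under pp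
  have hexp_int_pp : ∀ lam : ℝ, Integrable (fun p => exp (lam * g p)) pp := by
    intro lam
    refine (integrable_const (exp |lam|)).mono'
      ((hg_meas.const_mul lam).exp.aestronglyMeasurable) ?_
    filter_upwards [hpp_ae] with p hp
    have h1 := hLp_mem p.1
    have h2 := hLe_mem_of p.1 p.2 hp
    rw [Real.norm_eq_abs, abs_of_pos (exp_pos _)]
    apply Real.exp_le_exp.mpr
    calc lam * g p ≤ |lam * g p| := le_abs_self _
      _ = |lam| * |g p| := abs_mul _ _
      _ ≤ |lam| * 1 := by
          apply mul_le_mul_of_nonneg_left _ (abs_nonneg lam)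
          rw [abs_le]
          constructor
          · simp only [hg_def]; linarith [h1.1, h2.2]
          · simp only [hg_def]; linarith [h1.2, h2.1]
      _ = |lam| := mul_one _
  -- inner MGF bound
  have hmgf : ∀ lam : ℝ, ∫ p, exp (lam * g p) ∂pp ≤ exp (lam ^ 2 / (8 * n)) := by
    intro lam
    rw [hpp_def, integral_prod _ (hexp_int_pp lam)]
    have hinner : ∀ θ : Θ, ∫ d, exp (lam * g (θ, d)) ∂Dn ≤ exp (lam ^ 2 / (8 * n)) := by
      intro θ
      exact mgf_pi' P n hn (ℓ θ) (hℓθ_meas θ) (hbound θ) lam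
    calc ∫ θ, ∫ d, exp (lam * g (θ, d)) ∂Dn ∂(μ.map θhat)
        ≤ ∫ _θ, exp (lam ^ 2 / (8 * n)) ∂(μ.map θhat) := by
          apply integral_mono_of_nonneg
          · filter_upwards [] with θ
            exact integral_nonneg fun d => (exp_pos _).le
          · exact integrable_const _
          · filter_upwards [] with θ; exact hinner θ
      _ = exp (lam ^ 2 / (8 * n)) := by simp
  have hlog : ∀ lam : ℝ, Real.log (∫ p, exp (lam * g p) ∂pp) ≤ lam ^ 2 / (8 * n) := by
    intro lam
    have hpos : 0 < ∫ p, exp (lam * g p) ∂pp := integral_exp_pos (hexp_int_pp lam)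
    rw [Real.log_le_iff_le_exp hpos]
    exact hmgf lam
  have hDV : ∀ lam : ℝ, lam * ∫ p, g p ∂J ≤ Ir + lam ^ 2 / (8 * n) := by
    intro lam
    have h2 := dv_bound' J pp hac hint (fun p => lam * g p)
      (hg_int_J.const_mul lam) (hexp_int_pp lam)
    rw [integral_const_mul] at h2
    linarith [hlog lam]
  set gap : ℝ := (∫ ω, ∫ x, ℓ (θhat ω) x ∂P ∂μ) - ∫ x, ℓ θstar x ∂P with hgap_def
  have hgap_le : gap ≤ ∫ p, g p ∂J := by
    rw [hgJ]
    have h0 : (∫ ω, ∫ x, ℓ (θhat ω) x ∂P ∂μ) = ∫ ω, Lp (θhat ω) ∂μ := rfl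
    have h1 : (∫ x, ℓ θstar x ∂P) = Lp θstar := rfl
    rw [hgap_def, h0, h1]
    linarith [hstepD]
  have hnR : (0:ℝ) < n := by exact_mod_cast hn
  have hkey : ∀ lam : ℝ, 0 ≤ lam → lam * gap ≤ Ir + lam ^ 2 / (8 * n) := by
    intro lam hlam
    calc lam * gap ≤ lam * ∫ p, g p ∂J := mul_le_mul_of_nonneg_left hgap_le hlam
      _ ≤ Ir + lam ^ 2 / (8 * n) := hDV lam
  have hfinal : gap ≤ Real.sqrt (Ir / (2 * n)) := by
    rcases le_or_gt gap 0 with h | h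
    · exact h.trans (Real.sqrt_nonneg _)
    rcases eq_or_lt_of_le hIr_nonneg with hIr0 | hIr0
    · exfalso
      have hk := hkey (4 * n * gap) (by positivity)
      rw [← hIr0] at hk
      have : (4 * (n:ℝ) * gap) ^ 2 / (8 * n) = 2 * n * gap ^ 2 := by
        field_simp; ring
      rw [this] at hk
      nlinarith [mul_pos (mul_pos hnR h) h, sq_nonneg gap, mul_pos h h]
    · set lam : ℝ := Real.sqrt (8 * n * Ir) with hlam_def
      have hlam_pos : 0 < lam := Real.sqrt_pos.mpr (by positivity)
      have hlam_sq : lam ^ 2 = 8 * n * Ir := Real.sq_sqrt (by positivity)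
      have h1 := hkey lam hlam_pos.le
      have h3 : lam * gap ≤ 2 * Ir := by
        rw [hlam_sq] at h1
        have : 8 * (n:ℝ) * Ir / (8 * n) = Ir := by field_simp
        rw [this] at h1
        linarith
      have h2 : lam * Real.sqrt (Ir / (2 * n)) = 2 * Ir := by
        rw [hlam_def, ← Real.sqrt_mul (by positivity)]
        rw [show (8 * (n:ℝ) * Ir) * (Ir / (2 * n)) = (2 * Ir) ^ 2 by field_simp; ring]
        exact Real.sqrt_sq (by positivity)
      exact (mul_le_mul_iff_of_pos_left hlam_pos).mp (by rw [h2]; exact h3)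
  have hrhs : ((ENNReal.ofReal Ir) / (2 * (n:ℝ≥0∞))) ^ (1/2 : ℝ)
      = ENNReal.ofReal (Real.sqrt (Ir / (2 * n))) := by
    have e1 : (2 * (n:ℝ≥0∞)) = ENNReal.ofReal (2 * n) := by
      rw [ENNReal.ofReal_mul (by norm_num)]
      norm_num [ENNReal.ofReal_natCast]
    rw [e1, ← ENNReal.ofReal_div_of_pos (by positivity),
      ENNReal.ofReal_rpow_of_nonneg (by positivity) (by norm_num), ← Real.sqrt_eq_rpow]
  rw [hrhs]
  exact ENNReal.ofReal_le_ofReal hfinal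

end Helpers
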